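/- Let μ be a probability measure on ℝ^{dN} × M₁ with ∫ |y| dμ(y,w) < ∞, set W̄ := ∫ (w ⊗ I_d) dμ(y,w) and z := ∫ (w ⊗ I_d) y dμ(y,w), and let α > 0 be such that α‖𝒥⊥W̄‖ < 1. If π is an invariant probability measure for the kernel P_α (P_α f(x) := ∫ f(α 𝒥⊥ (w ⊗ I_d)(x + y)) dμ(y,w)) with ∫ |x| dπ(x) < ∞, then its mean satisfies ∫ x dπ(x) = (α^{−1} I_{dN} − 𝒥⊥ W̄)^{−1} 𝒥⊥ z. -/

import Mathlib

open MeasureTheory ProbabilityTheory Filter Matrix Set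
open scoped Kronecker Topology ENNReal NNReal

noncomputable section

namespace DistSA

instance matMS {m n : Type*} : MeasurableSpace (Matrix m n ℝ) := by
  unfold Matrix; infer_instance

/-- The vector space `ℝ^{dN}`, coordinates indexed by pairs `(i, j)` where `i` is the agent. -/
abbrev EVec (N d : ℕ) := Fin N × Fin d → ℝ

/-- Euclidean norm on a finite product of copies of `ℝ`. -/
def enorm {ι : Type*} [Fintype ι] (x : ι → ℝ) : ℝ := Real.sqrt (∑ i, (x i) ^ 2)

/-- Spectral (operator) norm with respect to the Euclidean norm. -/
def specNorm {ι : Type*} [Fintype ι] (A : Matrix ι ι ℝ) : ℝ :=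
  sInf {c | 0 ≤ c ∧ ∀ x : ι → ℝ, enorm (A.mulVec x) ≤ c * enorm x}

/-- Spectral radius of a real matrix: largest modulus of a complex eigenvalue. -/
def specRad {ι : Type*} [Fintype ι] [DecidableEq ι] (A : Matrix ι ι ℝ) : ℝ :=
  sSup ((fun z : ℂ => ‖z‖) '' spectrum ℂ (A.map (algebraMap ℝ ℂ)))

variable (N d : ℕ)

/-- `J = (1/N) 𝟏𝟏ᵀ`, the orthogonal projector onto the span of the all-one vector. -/
def Jmat : Matrix (Fin N) (Fin N) ℝ := Matrix.of fun _ _ => (N : ℝ)⁻¹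

/-- `J⊥ = I_N - J`. -/
def Jperp : Matrix (Fin N) (Fin N) ℝ := 1 - Jmat N

/-- `w ⊗ I_d`, acting on `ℝ^{dN}`. -/
def Kro (w : Matrix (Fin N) (Fin N) ℝ) : Matrix (Fin N × Fin d) (Fin N × Fin d) ℝ :=
  w ⊗ₖ (1 : Matrix (Fin d) (Fin d) ℝ)

/-- `𝒥⊥ = J⊥ ⊗ I_d`. -/
def Jperpb : Matrix (Fin N × Fin d) (Fin N × Fin d) ℝ := Kro N d (Jperp N)

/-- `𝒥 = J ⊗ I_d`. -/
def Jb : Matrix (Fin N × Fin d) (Fin N × Fin d) ℝ := Kro N d (Jmat N)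

/-- `⟨x⟩ = (1/N)(𝟏ᵀ ⊗ I_d) x = (x₁ + ⋯ + x_N)/N`. -/
def avg (x : EVec N d) : Fin d → ℝ := fun j => (N : ℝ)⁻¹ * ∑ i, x (i, j)

/-- `𝟏 ⊗ ϑ`, the consensus vector with common value `ϑ`. -/
def emb (ϑ : Fin d → ℝ) : EVec N d := fun p => ϑ p.2

/-- Row-stochastic matrices: nonnegative entries, rows summing to 1. -/
def RowStochastic (w : Matrix (Fin N) (Fin N) ℝ) : Prop :=
  (∀ i j, 0 ≤ w i j) ∧ ∀ i, ∑ j, w i j = 1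

/-- One step of the normalized-disagreement Markov chain:
`x ↦ α 𝒥⊥ (w ⊗ I_d)(x + y)` for an observation `(y, w)`. -/
def stepFun (α : ℝ) (x : EVec N d) (p : EVec N d × Matrix (Fin N) (Fin N) ℝ) : EVec N d :=
  α • (Jperpb N d).mulVec ((Kro N d p.2).mulVec (x + p.1))

/-- `π` is an invariant probability measure for the kernel `P_α` driven by `μ`:
`π P_α = π`. -/
def IsInvariant (μ : Measure (EVec N d × Matrix (Fin N) (Fin N) ℝ)) (α : ℝ)
    (π : Measure (EVec N d)) : Prop :=
  ∀ A : Set (EVec N d), MeasurableSet A →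
    ∫⁻ x, (Measure.map (stepFun N d α x) μ) A ∂π = π A

/-- The kernel `P_α` acting on vector-valued functions. -/
def kerPV (μ : Measure (EVec N d × Matrix (Fin N) (Fin N) ℝ)) (α : ℝ)
    (f : EVec N d → EVec N d) : EVec N d → EVec N d :=
  fun x => ∫ p, f (stepFun N d α x p) ∂μ

/-- The kernel `P_α` acting on scalar functions. -/
def kerPS (μ : Measure (EVec N d × Matrix (Fin N) (Fin N) ℝ)) (α : ℝ)
    (g : EVec N d → ℝ) : EVec N d → ℝ :=
  fun x => ∫ p, g (stepFun N d α x p) ∂μ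

section EnormLemmas

variable {ι : Type*} [Fintype ι]

lemma enorm_eq_norm (x : ι → ℝ) :
    enorm x = ‖(WithLp.equiv 2 (ι → ℝ)).symm x‖ := by
  rw [show ((WithLp.equiv 2 (ι → ℝ)).symm x : EuclideanSpace ℝ ι) = (WithLp.equiv 2 (ι → ℝ)).symm x from rfl,
    EuclideanSpace.norm_eq]
  simp [enorm, Real.norm_eq_abs, sq_abs]

lemma enorm_nonneg' (x : ι → ℝ) : 0 ≤ enorm x := Real.sqrt_nonneg _

lemma enorm_pos_of_ne_zero {x : ι → ℝ} (hx : x ≠ 0) : 0 < enorm x := by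
  rw [enorm_eq_norm]
  rw [norm_pos_iff]
  intro h
  exact hx ((WithLp.equiv 2 (ι → ℝ)).symm.injective (by simpa using h))

lemma enorm_smul' (r : ℝ) (x : ι → ℝ) : enorm (r • x) = |r| * enorm x := by
  rw [enorm_eq_norm, enorm_eq_norm,
    show (WithLp.equiv 2 (ι → ℝ)).symm (r • x) = r • (WithLp.equiv 2 (ι → ℝ)).symm x from rfl,
    norm_smul, Real.norm_eq_abs]

lemma enorm_add_le' (x y : ι → ℝ) : enorm (x + y) ≤ enorm x + enorm y := by
  rw [enorm_eq_norm, enorm_eq_norm, enorm_eq_norm,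
    show (WithLp.equiv 2 (ι → ℝ)).symm (x + y)
      = (WithLp.equiv 2 (ι → ℝ)).symm x + (WithLp.equiv 2 (ι → ℝ)).symm y from rfl]
  exact norm_add_le _ _

lemma abs_apply_le_enorm (x : ι → ℝ) (c : ι) : |x c| ≤ enorm x := by
  rw [enorm, ← Real.sqrt_sq_eq_abs]
  exact Real.sqrt_le_sqrt (Finset.single_le_sum (fun i _ => sq_nonneg (x i)) (Finset.mem_univ c))

lemma exists_specBound (M : Matrix ι ι ℝ) :
    ∃ c, 0 ≤ c ∧ ∀ x : ι → ℝ, enorm (M.mulVec x) ≤ c * enorm x := by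
  refine ⟨Real.sqrt (∑ a, ∑ b, M a b ^ 2), Real.sqrt_nonneg _, fun x => ?_⟩
  rw [enorm, enorm, ← Real.sqrt_mul (by positivity)]
  apply Real.sqrt_le_sqrt
  rw [Finset.sum_mul]
  refine Finset.sum_le_sum fun a _ => ?_
  calc (M.mulVec x a) ^ 2 = (∑ b, M a b * x b) ^ 2 := rfl
    _ ≤ (∑ b, M a b ^ 2) * ∑ b, x b ^ 2 :=
        Finset.sum_mul_sq_le_sq_mul_sq Finset.univ _ _

lemma specNorm_spec (M : Matrix ι ι ℝ) :
    0 ≤ specNorm M ∧ ∀ x : ι → ℝ, enorm (M.mulVec x) ≤ specNorm M * enorm x := by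
  have hmem : specNorm M ∈ {c : ℝ | 0 ≤ c ∧ ∀ x : ι → ℝ, enorm (M.mulVec x) ≤ c * enorm x} := by
    apply IsClosed.csInf_mem
    · have : {c : ℝ | 0 ≤ c ∧ ∀ x : ι → ℝ, enorm (M.mulVec x) ≤ c * enorm x}
          = {c : ℝ | 0 ≤ c} ∩ ⋂ x : ι → ℝ, {c : ℝ | enorm (M.mulVec x) ≤ c * enorm x} := by
        ext c; simp [Set.mem_iInter]
      rw [this]
      refine IsClosed.inter (isClosed_le continuous_const continuous_id)
        (isClosed_iInter fun x => isClosed_le continuous_const (continuous_id.mul continuous_const))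
    · obtain ⟨c, hc0, hc⟩ := exists_specBound M
      exact ⟨c, hc0, hc⟩
    · exact ⟨0, fun c hc => hc.1⟩
  exact hmem

lemma isUnit_det_smul_one_sub {ι : Type*} [Fintype ι] [DecidableEq ι]
    (B : Matrix ι ι ℝ) (β : ℝ) (hβ : 0 < β) (h : specNorm B < β) :
    IsUnit (β • (1 : Matrix ι ι ℝ) - B).det := by
  rw [isUnit_iff_ne_zero]
  intro hdet
  obtain ⟨v, hv, hv0⟩ := Matrix.exists_mulVec_eq_zero_iff.mpr hdet
  have h1 : β • v = B.mulVec v := by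
    have := hv0
    rw [Matrix.sub_mulVec, Matrix.smul_mulVec, Matrix.one_mulVec, sub_eq_zero] at this
    exact this
  have h2 : enorm (β • v) ≤ specNorm B * enorm v := h1 ▸ (specNorm_spec B).2 v
  rw [enorm_smul', abs_of_pos hβ] at h2
  have hpos : 0 < enorm v := enorm_pos_of_ne_zero hv
  have : β ≤ specNorm B := le_of_mul_le_mul_right h2 hpos
  linarith

end EnormLemmas

section IntegrableAux

open MeasureTheory

lemma integrable_comp_fst {X Y : Type*} [MeasurableSpace X] [MeasurableSpace Y]
    {μ : Measure X} {ν : Measure Y} [SFinite ν] [IsProbabilityMeasure ν]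
    {f : X → ℝ} (hf : Integrable f μ) :
    Integrable (fun q : X × Y => f q.1) (μ.prod ν) := by
  have hmap : Measure.map Prod.fst (μ.prod ν) = μ := by
    rw [Measure.map_fst_prod]; simp
  rw [← hmap] at hf
  exact (integrable_map_measure hf.1 measurable_fst.aemeasurable).mp hf

lemma integrable_comp_snd {X Y : Type*} [MeasurableSpace X] [MeasurableSpace Y]
    {μ : Measure X} {ν : Measure Y} [SFinite ν] [IsProbabilityMeasure μ]
    {f : Y → ℝ} (hf : Integrable f ν) :
    Integrable (fun q : X × Y => f q.2) (μ.prod ν) := by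
  have hmap : Measure.map Prod.snd (μ.prod ν) = ν := by
    rw [Measure.map_snd_prod]; simp
  rw [← hmap] at hf
  exact (integrable_map_measure hf.1 measurable_snd.aemeasurable).mp hf

end IntegrableAux

section StepMeasurability

variable {N d : ℕ}

lemma measurable_Kro_entry (b c : Fin N × Fin d) :
    Measurable fun w : Matrix (Fin N) (Fin N) ℝ => Kro N d w b c := by
  have : (fun w : Matrix (Fin N) (Fin N) ℝ => Kro N d w b c)
      = fun w => w b.1 c.1 * (1 : Matrix (Fin d) (Fin d) ℝ) b.2 c.2 := by
    funext w; simp [Kro, Matrix.kroneckerMap_apply]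
  rw [this]
  exact ((measurable_pi_apply c.1).comp (measurable_pi_apply b.1)).mul_const _

lemma stepFun_apply (α : ℝ) (x : EVec N d) (p : EVec N d × Matrix (Fin N) (Fin N) ℝ)
    (a : Fin N × Fin d) :
    stepFun N d α x p a
      = α * ∑ b, Jperpb N d a b * ∑ c, Kro N d p.2 b c * (x c + p.1 c) := rfl

lemma measurable_stepFun (α : ℝ) :
    Measurable fun q : EVec N d × (EVec N d × Matrix (Fin N) (Fin N) ℝ) =>
      stepFun N d α q.1 q.2 := by
  apply measurable_pi_lambda
  intro a
  simp only [stepFun_apply]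
  apply Measurable.const_mul
  apply Finset.measurable_sum
  intro b _
  apply Measurable.const_mul
  apply Finset.measurable_sum
  intro c _
  have h1 : Measurable fun q : EVec N d × (EVec N d × Matrix (Fin N) (Fin N) ℝ) =>
      Kro N d q.2.2 b c :=
    (measurable_Kro_entry b c).comp (measurable_snd.comp measurable_snd)
  have h2 : Measurable fun q : EVec N d × (EVec N d × Matrix (Fin N) (Fin N) ℝ) =>
      q.1 c + q.2.1 c :=
    ((measurable_pi_apply c).comp measurable_fst).add
      ((measurable_pi_apply c).comp (measurable_fst.comp measurable_snd))
  exact h1.mul h2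

end StepMeasurability

set_option maxHeartbeats 1000000 in
/-- The mean of an invariant measure of `P_α` is
`(α⁻¹ I − 𝒥⊥ W̄)⁻¹ 𝒥⊥ z`. -/
theorem invariant_measure_first_moment
    (hN : 0 < N) (hd : 0 < d)
    (μ : Measure (EVec N d × Matrix (Fin N) (Fin N) ℝ)) [IsProbabilityMeasure μ]
    (hM1 : ∀ᵐ p ∂μ, RowStochastic N p.2)
    (hmom1 : ∫⁻ p, ENNReal.ofReal (enorm p.1) ∂μ < ⊤)
    (Wbar : Matrix (Fin N × Fin d) (Fin N × Fin d) ℝ)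
    (hWbar : Wbar = Matrix.of fun a b => ∫ p, Kro N d p.2 a b ∂μ)
    (z : EVec N d) (hz : z = fun a => ∫ p, (Kro N d p.2).mulVec p.1 a ∂μ)
    (α : ℝ) (hα : 0 < α) (hαW : α * specNorm (Jperpb N d * Wbar) < 1)
    (π : Measure (EVec N d)) [IsProbabilityMeasure π]
    (hπinv : IsInvariant N d μ α π)
    (hπmom1 : ∫⁻ x, ENNReal.ofReal (enorm x) ∂π < ⊤) :
    (fun a => ∫ x, x a ∂π) =
      (α⁻¹ • (1 : Matrix (Fin N × Fin d) (Fin N × Fin d) ℝ) - Jperpb N d * Wbar)⁻¹.mulVec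
        ((Jperpb N d).mulVec z) := by
  classical
  have hα' : α ≠ 0 := ne_of_gt hα
  set m : EVec N d := fun a => ∫ x, x a ∂π with hmdef
  -- coordinate integrability w.r.t. π
  have hcoordπ : ∀ c, Integrable (fun x : EVec N d => x c) π := by
    intro c
    refine ⟨(measurable_pi_apply c).aestronglyMeasurable, ?_⟩
    refine lt_of_le_of_lt (lintegral_mono fun x => ?_) hπmom1
    rw [Real.enorm_eq_ofReal_abs]
    exact ENNReal.ofReal_le_ofReal (abs_apply_le_enorm x c)
  -- coordinate integrability w.r.t. μ
  have hcoordμ : ∀ c, Integrable (fun p : EVec N d × Matrix (Fin N) (Fin N) ℝ => p.1 c) μ := by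
    intro c
    refine ⟨((measurable_pi_apply c).comp measurable_fst).aestronglyMeasurable, ?_⟩
    refine lt_of_le_of_lt (lintegral_mono fun p => ?_) hmom1
    rw [Real.enorm_eq_ofReal_abs]
    exact ENNReal.ofReal_le_ofReal (abs_apply_le_enorm p.1 c)
  -- a.e. bound on Kronecker entries
  have hKbd : ∀ᵐ p ∂μ, ∀ b c : Fin N × Fin d, |Kro N d p.2 b c| ≤ 1 := by
    filter_upwards [hM1] with p hp
    intro b c
    have hK : Kro N d p.2 b c = p.2 b.1 c.1 * (1 : Matrix (Fin d) (Fin d) ℝ) b.2 c.2 := by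
      simp [Kro, Matrix.kroneckerMap_apply]
    rw [hK, abs_mul]
    have h1 : |p.2 b.1 c.1| ≤ 1 := by
      rw [abs_of_nonneg (hp.1 _ _)]
      calc p.2 b.1 c.1 ≤ ∑ j, p.2 b.1 j :=
            Finset.single_le_sum (f := fun j => p.2 b.1 j) (fun j _ => hp.1 b.1 j)
              (Finset.mem_univ c.1)
        _ = 1 := hp.2 _
    have h2 : |(1 : Matrix (Fin d) (Fin d) ℝ) b.2 c.2| ≤ 1 := by
      rcases eq_or_ne b.2 c.2 with h | h <;> simp [Matrix.one_apply, h]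
    calc |p.2 b.1 c.1| * |(1 : Matrix (Fin d) (Fin d) ℝ) b.2 c.2| ≤ 1 * 1 :=
          mul_le_mul h1 h2 (abs_nonneg _) zero_le_one
      _ = 1 := one_mul 1
  have hKmeas : ∀ b c : Fin N × Fin d,
      Measurable fun p : EVec N d × Matrix (Fin N) (Fin N) ℝ => Kro N d p.2 b c :=
    fun b c => (measurable_Kro_entry b c).comp measurable_snd
  have hKint : ∀ b c : Fin N × Fin d,
      Integrable (fun p : EVec N d × Matrix (Fin N) (Fin N) ℝ => Kro N d p.2 b c) μ := by
    intro b c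
    refine Integrable.mono' (integrable_const 1) (hKmeas b c).aestronglyMeasurable ?_
    filter_upwards [hKbd] with p hp
    simpa [Real.norm_eq_abs] using hp b c
  have hKyint : ∀ b c : Fin N × Fin d,
      Integrable (fun p : EVec N d × Matrix (Fin N) (Fin N) ℝ => Kro N d p.2 b c * p.1 c) μ := by
    intro b c
    refine Integrable.mono' (hcoordμ c).abs
      ((hKmeas b c).mul ((measurable_pi_apply c).comp measurable_fst)).aestronglyMeasurable ?_
    filter_upwards [hKbd] with p hp
    rw [Real.norm_eq_abs, abs_mul]
    calc |Kro N d p.2 b c| * |p.1 c| ≤ 1 * |p.1 c| :=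
          mul_le_mul_of_nonneg_right (hp b c) (abs_nonneg _)
      _ = |p.1 c| := one_mul _
  -- the pushforward of π.prod μ by the step map is π
  have hFmeas : Measurable fun q : EVec N d × (EVec N d × Matrix (Fin N) (Fin N) ℝ) =>
      stepFun N d α q.1 q.2 := measurable_stepFun α
  have hstepmeas : ∀ x : EVec N d, Measurable (stepFun N d α x) := by
    intro x
    have h : stepFun N d α x = (fun q : EVec N d × (EVec N d × Matrix (Fin N) (Fin N) ℝ) =>
        stepFun N d α q.1 q.2) ∘ (fun p => (x, p)) := rfl
    rw [h]
    exact hFmeas.comp measurable_prodMk_left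
  have hν : Measure.map (fun q : EVec N d × (EVec N d × Matrix (Fin N) (Fin N) ℝ) =>
      stepFun N d α q.1 q.2) (π.prod μ) = π := by
    ext A hA
    rw [Measure.map_apply hFmeas hA, Measure.prod_apply (hFmeas hA), ← hπinv A hA]
    refine lintegral_congr fun x => ?_
    rw [Measure.map_apply (hstepmeas x) hA]
    rfl
  -- a.e. bound lifted to the product
  have hM1' : ∀ᵐ q ∂(π.prod μ), ∀ b c : Fin N × Fin d, |Kro N d q.2.2 b c| ≤ 1 := by
    rw [ae_iff] at hKbd ⊢
    have hset : {q : EVec N d × (EVec N d × Matrix (Fin N) (Fin N) ℝ) |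
        ¬ ∀ b c : Fin N × Fin d, |Kro N d q.2.2 b c| ≤ 1}
        = Set.univ ×ˢ {p : EVec N d × Matrix (Fin N) (Fin N) ℝ |
            ¬ ∀ b c : Fin N × Fin d, |Kro N d p.2 b c| ≤ 1} := by
      ext q; simp [Set.mem_prod]
    rw [hset, Measure.prod_prod, hKbd, mul_zero]
  -- integrability of coordinates of the step map on the product
  have hFint : ∀ a, Integrable (fun q : EVec N d × (EVec N d × Matrix (Fin N) (Fin N) ℝ) =>
      stepFun N d α q.1 q.2 a) (π.prod μ) := by
    intro a
    refine Integrable.mono'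
      (g := fun q => (|α| * ∑ b, |Jperpb N d a b|) * ((∑ c, |q.1 c|) + ∑ c, |q.2.1 c|)) ?_ ?_ ?_
    · apply Integrable.const_mul
      exact (integrable_comp_fst (integrable_finset_sum _ fun c _ => (hcoordπ c).abs)).add
        (integrable_comp_snd (integrable_finset_sum _ fun c _ => (hcoordμ c).abs))
    · exact ((measurable_pi_apply a).comp hFmeas).aestronglyMeasurable
    · filter_upwards [hM1'] with q hq
      rw [Real.norm_eq_abs, stepFun_apply]
      have hsb : ∀ b : Fin N × Fin d, |∑ c, Kro N d q.2.2 b c * (q.1 c + q.2.1 c)|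
          ≤ (∑ c, |q.1 c|) + ∑ c, |q.2.1 c| := by
        intro b
        calc |∑ c, Kro N d q.2.2 b c * (q.1 c + q.2.1 c)|
            ≤ ∑ c, |Kro N d q.2.2 b c * (q.1 c + q.2.1 c)| := Finset.abs_sum_le_sum_abs _ _
          _ ≤ ∑ c, |q.1 c + q.2.1 c| := by
              refine Finset.sum_le_sum fun c _ => ?_
              rw [abs_mul]
              calc |Kro N d q.2.2 b c| * |q.1 c + q.2.1 c| ≤ 1 * |q.1 c + q.2.1 c| :=
                    mul_le_mul_of_nonneg_right (hq b c) (abs_nonneg _)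
                _ = |q.1 c + q.2.1 c| := one_mul _
          _ ≤ ∑ c, (|q.1 c| + |q.2.1 c|) := Finset.sum_le_sum fun c _ => abs_add_le _ _
          _ = (∑ c, |q.1 c|) + ∑ c, |q.2.1 c| := Finset.sum_add_distrib
      calc |α * ∑ b, Jperpb N d a b * ∑ c, Kro N d q.2.2 b c * (q.1 c + q.2.1 c)|
          = |α| * |∑ b, Jperpb N d a b * ∑ c, Kro N d q.2.2 b c * (q.1 c + q.2.1 c)| :=
            abs_mul _ _
        _ ≤ |α| * ∑ b, |Jperpb N d a b * ∑ c, Kro N d q.2.2 b c * (q.1 c + q.2.1 c)| :=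
            mul_le_mul_of_nonneg_left (Finset.abs_sum_le_sum_abs _ _) (abs_nonneg _)
        _ ≤ |α| * ∑ b, |Jperpb N d a b| * ((∑ c, |q.1 c|) + ∑ c, |q.2.1 c|) := by
            refine mul_le_mul_of_nonneg_left (Finset.sum_le_sum fun b _ => ?_) (abs_nonneg α)
            rw [abs_mul]
            exact mul_le_mul_of_nonneg_left (hsb b) (abs_nonneg _)
        _ = (|α| * ∑ b, |Jperpb N d a b|) * ((∑ c, |q.1 c|) + ∑ c, |q.2.1 c|) := by
            rw [← Finset.sum_mul]; ring
  -- step 1: invariance in integral form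
  have h1 : ∀ a, m a = ∫ x, (∫ p, stepFun N d α x p a ∂μ) ∂π := by
    intro a
    calc m a = ∫ x, x a ∂π := rfl
      _ = ∫ v, v a ∂(Measure.map (fun q : EVec N d × (EVec N d × Matrix (Fin N) (Fin N) ℝ) =>
            stepFun N d α q.1 q.2) (π.prod μ)) := by rw [hν]
      _ = ∫ q, stepFun N d α q.1 q.2 a ∂(π.prod μ) :=
            integral_map hFmeas.aemeasurable (measurable_pi_apply a).aestronglyMeasurable
      _ = ∫ x, ∫ p, stepFun N d α x p a ∂μ ∂π := integral_prod _ (hFint a)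
  -- step 2: inner integral
  have h2 : ∀ (x : EVec N d) a, (∫ p, stepFun N d α x p a ∂μ)
      = α * ((Jperpb N d).mulVec (Wbar.mulVec x + z) a) := by
    intro x a
    have hexp : ∀ p : EVec N d × Matrix (Fin N) (Fin N) ℝ,
        stepFun N d α x p a = α * ∑ b, Jperpb N d a b *
          ((∑ c, Kro N d p.2 b c * x c) + ∑ c, Kro N d p.2 b c * p.1 c) := by
      intro p
      rw [stepFun_apply]
      congr 1
      refine Finset.sum_congr rfl fun b _ => ?_
      congr 1
      rw [← Finset.sum_add_distrib]
      exact Finset.sum_congr rfl fun c _ => by ring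
    simp_rw [hexp]
    rw [integral_const_mul]
    congr 1
    have hib : ∀ b : Fin N × Fin d,
        Integrable (fun p : EVec N d × Matrix (Fin N) (Fin N) ℝ =>
          (∑ c, Kro N d p.2 b c * x c) + ∑ c, Kro N d p.2 b c * p.1 c) μ := fun b =>
      (integrable_finset_sum _ fun c _ => (hKint b c).mul_const (x c)).add
        (integrable_finset_sum _ fun c _ => hKyint b c)
    rw [integral_finset_sum _ (fun b _ => ((hib b).const_mul _))]
    have hrhs : (Jperpb N d).mulVec (Wbar.mulVec x + z) a
        = ∑ b, Jperpb N d a b * ((Wbar.mulVec x) b + z b) := rfl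
    rw [hrhs]
    refine Finset.sum_congr rfl fun b _ => ?_
    rw [integral_const_mul]
    congr 1
    rw [integral_add (integrable_finset_sum _ fun c _ => (hKint b c).mul_const (x c))
      (integrable_finset_sum _ fun c _ => hKyint b c)]
    congr 1
    · rw [integral_finset_sum _ (fun c _ => (hKint b c).mul_const (x c))]
      have : (Wbar.mulVec x) b = ∑ c, Wbar b c * x c := rfl
      rw [this]
      refine Finset.sum_congr rfl fun c _ => ?_
      rw [integral_mul_const]
      congr 1
      rw [hWbar]
      rfl
    · rw [hz]
      rfl
  -- step 3: outer integral
  have h3 : ∀ a, (∫ x, α * ((Jperpb N d).mulVec (Wbar.mulVec x + z) a) ∂π)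
      = α * (((Jperpb N d * Wbar).mulVec m) a + ((Jperpb N d).mulVec z) a) := by
    intro a
    rw [integral_const_mul]
    congr 1
    have hexp : ∀ x : EVec N d, (Jperpb N d).mulVec (Wbar.mulVec x + z) a
        = ∑ b, Jperpb N d a b * ((∑ c, Wbar b c * x c) + z b) := fun x => rfl
    simp_rw [hexp]
    have hib : ∀ b : Fin N × Fin d, Integrable (fun x : EVec N d =>
        (∑ c, Wbar b c * x c) + z b) π := fun b =>
      (integrable_finset_sum _ fun c _ => (hcoordπ c).const_mul (Wbar b c)).add
        (integrable_const _)
    rw [integral_finset_sum _ (fun b _ => (hib b).const_mul _)]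
    have hper : ∀ b : Fin N × Fin d,
        (∫ x, Jperpb N d a b * ((∑ c, Wbar b c * x c) + z b) ∂π)
        = Jperpb N d a b * ((∑ c, Wbar b c * m c) + z b) := by
      intro b
      rw [integral_const_mul]
      congr 1
      rw [integral_add (integrable_finset_sum _ fun c _ => (hcoordπ c).const_mul (Wbar b c))
        (integrable_const _)]
      congr 1
      · rw [integral_finset_sum _ (fun c _ => (hcoordπ c).const_mul (Wbar b c))]
        exact Finset.sum_congr rfl fun c _ => integral_const_mul _ _
      · simp
    simp_rw [hper]
    have hlhs : ((Jperpb N d * Wbar).mulVec m) a = ∑ b, (∑ e, Jperpb N d a e * Wbar e b) * m b := rfl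
    rw [hlhs]
    have hrhs2 : ((Jperpb N d).mulVec z) a = ∑ b, Jperpb N d a b * z b := rfl
    rw [hrhs2]
    have hsplit : ∀ b : Fin N × Fin d, Jperpb N d a b * ((∑ c, Wbar b c * m c) + z b)
        = (∑ c, Jperpb N d a b * Wbar b c * m c) + Jperpb N d a b * z b := by
      intro b
      rw [mul_add, Finset.mul_sum]
      congr 1
      exact Finset.sum_congr rfl fun c _ => (mul_assoc _ _ _).symm
    simp_rw [hsplit]
    rw [Finset.sum_add_distrib]
    congr 1
    rw [Finset.sum_comm]
    refine Finset.sum_congr rfl fun b _ => ?_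
    rw [Finset.sum_mul]
  -- combine
  have hma : ∀ a, m a = α * (((Jperpb N d * Wbar).mulVec m) a + ((Jperpb N d).mulVec z) a) := by
    intro a
    rw [h1 a]
    simp_rw [h2]
    exact h3 a
  set A := α⁻¹ • (1 : Matrix (Fin N × Fin d) (Fin N × Fin d) ℝ) - Jperpb N d * Wbar with hAdef
  have hAm : A.mulVec m = (Jperpb N d).mulVec z := by
    funext a
    rw [hAdef, Matrix.sub_mulVec, Matrix.smul_mulVec, Matrix.one_mulVec]
    show α⁻¹ * m a - (Jperpb N d * Wbar).mulVec m a = (Jperpb N d).mulVec z a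
    rw [hma a, inv_mul_cancel_left₀ hα', add_sub_cancel_left]
  have hsn : specNorm (Jperpb N d * Wbar) < α⁻¹ := by
    have h0 := (specNorm_spec (Jperpb N d * Wbar)).1
    calc specNorm (Jperpb N d * Wbar)
        = α⁻¹ * (α * specNorm (Jperpb N d * Wbar)) := by field_simp
      _ < α⁻¹ * 1 := mul_lt_mul_of_pos_left hαW (inv_pos.mpr hα)
      _ = α⁻¹ := mul_one _
  have hdet : IsUnit A.det := by
    rw [hAdef]
    exact isUnit_det_smul_one_sub _ _ (inv_pos.mpr hα) hsn
  show m = A⁻¹.mulVec ((Jperpb N d).mulVec z)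
  rw [← hAm, Matrix.mulVec_mulVec, Matrix.nonsing_inv_mul _ hdet, Matrix.one_mulVec]


end DistSA
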